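/- Let F be a field, n ≥ 1, and x_0,…,x_n, y_0,…,y_n ∈ F with x_n + y_n ≠ 0. Then det H_n(x,y) equals the determinant of the bordered matrix of size n²+1 given in block form by [[x_n + y_n, (−1)^n x_n Uᵀ], [y_n U, H_{n−1}(x,y)]], where H_{n−1}(x,y) is the Hückel matrix of the triangle with rows 0,…,n−1 and parameters x_0,…,x_{n−1}, y_0,…,y_{n−1}, and U is the column vector of length n² indexed by the vertices (m,j) (0 ≤ m ≤ n−1, 0 ≤ j ≤ 2m) with U[(m,j)] = 0 for m < n−1, U[(n−1,j)] = (−1)^{j/2} for even j, and U[(n−1,j)] = 0 for odd j. -/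

import Mathlib

set_option linter.unreachableTactic false
set_option linter.unnecessarySeqFocus false
set_option linter.unusedTactic false
set_option maxHeartbeats 1600000

open Matrix

/-- Vertices of the graphene triangle with rows `0, …, n`: row `m` has `2m+1` atoms. -/
abbrev TriIdx (n : ℕ) := (m : Fin (n+1)) × Fin (2*m.val+1)

/-- The Hückel matrix of the graphene triangle, with row-dependent boundary parameters
`x m`, `y m`. -/
def Huckel (F : Type*) [Field F] (n : ℕ) (x y : Fin (n+1) → F) :
    Matrix (TriIdx n) (TriIdx n) F :=
  Matrix.of fun p q =>
    if p.1 = q.1 ∧ (p.2.val + 1 = q.2.val ∨ q.2.val + 1 = p.2.val) then 1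
    else if p.1.val + 1 = q.1.val ∧ Even p.2.val ∧ q.2.val = p.2.val + 1 then 1
    else if q.1.val + 1 = p.1.val ∧ Even q.2.val ∧ p.2.val = q.2.val + 1 then 1
    else if 1 ≤ p.1.val ∧ p.1 = q.1 ∧ p.2.val = 0 ∧ q.2.val = 2*p.1.val then y p.1
    else if 1 ≤ p.1.val ∧ p.1 = q.1 ∧ p.2.val = 2*p.1.val ∧ q.2.val = 0 then x p.1
    else if p.1.val = 0 ∧ q.1.val = 0 then x p.1 + y p.1
    else 0

/-- The bordering vector `U`: it vanishes on all rows except the top row (row `n`),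
where it has alternating components `1, 0, -1, 0, 1, …`. -/
def borderU (F : Type*) [Field F] (n : ℕ) : TriIdx n → F :=
  fun p => if p.1.val = n ∧ Even p.2.val then (-1 : F) ^ (p.2.val / 2) else 0

namespace HkAux
variable {F : Type*} [Field F]

def pathM (F : Type*) [Field F] (m : ℕ) : Matrix (Fin m) (Fin m) F :=
  Matrix.of fun i j => if i.val + 1 = j.val ∨ j.val + 1 = i.val then (1:F) else 0

lemma pathM_step (m : ℕ) : (pathM F (m+2)).det = -(pathM F m).det := by
  rw [det_succ_row_zero]
  rw [Finset.sum_eq_single (1 : Fin (m+2))]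
  · have h01 : pathM F (m+2) 0 (1 : Fin (m+2)) = 1 := by
      simp [pathM]
    rw [h01]
    rw [det_succ_column_zero]
    rw [Finset.sum_eq_single (0 : Fin (m+1))]
    · have h2 : (pathM F (m+2)).submatrix Fin.succ (Fin.succAbove 1) (0 : Fin (m+1)) 0 = 1 := by
        simp [pathM, Fin.succAbove]
      rw [h2]
      have h3 : ((pathM F (m+2)).submatrix Fin.succ (Fin.succAbove 1)).submatrix
          (Fin.succAbove 0) Fin.succ = pathM F m := by
        ext i j
        simp only [Matrix.submatrix_apply, pathM, Matrix.of_apply, Fin.succAbove_zero]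
        have h4 : ((1:Fin (m+2)).succAbove j.succ).val = j.val + 2 := by
          simp [Fin.succAbove, Fin.lt_def]
        have h5 : ((i.succ).succ : Fin (m+2)).val = i.val + 2 := by simp
        rw [h4]
        simp only [Fin.val_succ]
        split_ifs <;> first | rfl | (exfalso; omega)
      rw [h3]
      simp [Fin.val_one]
    · intro i _ hi
      have : (pathM F (m+2)).submatrix Fin.succ (Fin.succAbove 1) i 0 = 0 := by
        simp only [Matrix.submatrix_apply, pathM, Matrix.of_apply]
        have : ((1:Fin (m+2)).succAbove 0).val = 0 := by simp [Fin.succAbove]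
        rw [this, if_neg]
        simp only [Fin.val_succ]
        intro hc
        rcases hc with hc | hc
        · omega
        · exact hi (Fin.ext (by rw [Fin.val_zero]; omega))
      rw [this]; ring
    · simp
  · intro j _ hj
    have : pathM F (m+2) 0 j = 0 := by
      simp only [pathM, Matrix.of_apply]
      rw [if_neg]
      simp only [Fin.val_zero]
      intro hc
      rcases hc with hc | hc
      · exact hj (Fin.ext (by rw [Fin.val_one]; omega))
      · omega
    rw [this]; ring
  · simp

lemma pathM_even (N : ℕ) : (pathM F (2*N)).det = (-1)^N := by
  induction N with
  | zero => simp [show (2*0) = 0 from rfl]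
  | succ k ih =>
      have : (2*(k+1)) = (2*k)+2 := by ring
      rw [this, pathM_step, ih]
      ring

def Tm (F : Type*) [Field F] (N : ℕ) (a b : F) :
    Matrix (Fin (2*N+1)) (Fin (2*N+1)) F :=
  Matrix.of fun j k =>
    (if True ∧ (k:ℕ) = (j:ℕ) + 1 then (1:F) else 0)
  + (if 1 ≤ (j:ℕ) ∧ (k:ℕ) = (j:ℕ) - 1 then (1:F) else 0)
  + (if (j:ℕ) = 0 ∧ (k:ℕ) = 2*N then b else 0)
  + (if (j:ℕ) = 2*N ∧ (k:ℕ) = 0 then a else 0)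

def Sm (F : Type*) [Field F] (N : ℕ) (a b : F) :
    Matrix (Fin (2*N+1)) (Fin (2*N+1)) F :=
  Matrix.of fun j k =>
    (-1)^((j:ℕ)/2 + (k:ℕ)/2) *
      (if Even (j:ℕ) then
         (if Even (k:ℕ) then (-1)^N else if (j:ℕ) < (k:ℕ) then b else -a)
       else
         (if Even (k:ℕ) then (if (k:ℕ) < (j:ℕ) then a else -b) else (-1)^N * (a*b)))
    * (a+b)⁻¹

@[simp] lemma np1 (m : ℕ) : ((-1:F))^(m*2) = 1 := by
  rw [pow_mul']; norm_num
@[simp] lemma np2 (k m : ℕ) : ((-1:F))^(k+m*2) = (-1)^k := by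
  rw [pow_add, np1, mul_one]
@[simp] lemma np3 (k m : ℕ) : ((-1:F))^(m*2+k) = (-1)^k := by
  rw [pow_add, np1, one_mul]

lemma sum_collapse {m : ℕ} (P : Prop) [Decidable P] (v : ℕ) (c : F) (f : Fin m → F) :
    (∑ l : Fin m, (if P ∧ (l : ℕ) = v then c else 0) * f l)
      = if h : P ∧ v < m then c * f ⟨v, h.2⟩ else 0 := by
  by_cases hP : P
  · by_cases hv : v < m
    · rw [dif_pos ⟨hP, hv⟩, Finset.sum_eq_single (⟨v, hv⟩ : Fin m)]
      · rw [if_pos ⟨hP, rfl⟩]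
      · intro l _ hl
        rw [if_neg, zero_mul]
        rintro ⟨-, h2⟩
        exact hl (Fin.ext h2)
      · simp
    · rw [dif_neg (by tauto)]
      apply Finset.sum_eq_zero
      intro l _
      rw [if_neg, zero_mul]
      rintro ⟨-, h2⟩
      exact hv (h2 ▸ l.isLt)
  · rw [dif_neg (by tauto)]
    apply Finset.sum_eq_zero
    intro l _
    rw [if_neg (by tauto), zero_mul]

lemma sum_collapse' {m : ℕ} (P : Prop) [Decidable P] (v : ℕ) (c : F) (f : Fin m → F) :
    (∑ l : Fin m, f l * (if P ∧ (l : ℕ) = v then c else 0))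
      = if h : P ∧ v < m then f ⟨v, h.2⟩ * c else 0 := by
  have h0 := sum_collapse (F := F) P v c f
  calc (∑ l : Fin m, f l * (if P ∧ (l : ℕ) = v then c else 0))
      = ∑ l : Fin m, (if P ∧ (l : ℕ) = v then c else 0) * f l := by
        apply Finset.sum_congr rfl; intro l _; ring
    _ = _ := by rw [h0]; split <;> ring

lemma Tm_mul_Sm (N : ℕ) (hN : 1 ≤ N) (a b : F) (hs : a + b ≠ 0) :
    Tm F N a b * Sm F N a b = 1 := by
  obtain ⟨f, rfl⟩ : ∃ f, N = f + 1 := ⟨N - 1, by omega⟩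
  set N := f + 1 with hNdef
  ext j k
  rw [Matrix.mul_apply]
  simp only [Tm, Matrix.of_apply, add_mul, Finset.sum_add_distrib]
  rw [sum_collapse, sum_collapse, sum_collapse, sum_collapse]
  rcases j with ⟨jv, hjv⟩
  rcases k with ⟨kv, hkv⟩
  rw [Matrix.one_apply]
  simp only [Fin.mk.injEq]
  by_cases hj0 : jv = 0
  · subst hj0
    rw [dif_pos ⟨trivial, by omega⟩, dif_neg (by omega), dif_pos ⟨rfl, by omega⟩,
      dif_neg (by omega)]
    simp only [Sm, Matrix.of_apply, one_mul, add_zero, zero_add]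
    have hE1 : ¬ Even 1 := by decide
    have hE2 : Even (2*N) := ⟨N, by ring⟩
    have d2 : (2*N)/2 = N := by omega
    rcases Nat.even_or_odd kv with ⟨d, rfl⟩ | ⟨d, rfl⟩
    · have hEk : Even (d+d) := ⟨d, rfl⟩
      have d3 : (d+d)/2 = d := by omega
      rcases Nat.eq_zero_or_pos d with rfl | hd
      · rw [if_pos (show (0:ℕ) = 0 + 0 by omega)]
        simp only [hE1, hE2, hEk, if_true, if_false, d2, d3,
          show ((0:ℕ)+0 < 1) from by omega, show ¬ (2*N < 0+0) from by omega]
        field_simp <;> ring_nf <;> (try simp) <;> (try ring)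
      · rw [if_neg (show ¬ ((0:ℕ) = d + d) by omega)]
        simp only [hE1, hE2, hEk, if_true, if_false, d2, d3,
          show ¬ (d+d < 1) from by omega,
          show ¬ (2*N < d+d) from by omega]
        field_simp <;> ring_nf <;> (try simp) <;> (try ring)
    · have hOk : ¬ Even (2*d+1) := by simp only [Nat.even_iff]; omega
      have d3 : (2*d+1)/2 = d := by omega
      rw [if_neg (show ¬ ((0:ℕ) = 2*d + 1) by omega)]
      simp only [hE1, hE2, hOk, if_true, if_false, d2, d3,
        show ¬ (2*N < 2*d+1) from by omega]
      field_simp <;> ring_nf <;> (try simp) <;> (try ring)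
  · by_cases hjN : jv = 2*N
    · subst hjN
      rw [dif_neg (by omega), dif_pos ⟨by omega, by omega⟩, dif_neg (by omega),
        dif_pos ⟨rfl, by omega⟩]
      simp only [Sm, Matrix.of_apply, one_mul, add_zero, zero_add]
      have hO1 : ¬ Even (2*N - 1) := by simp only [Nat.even_iff]; omega
      have hE0 : Even 0 := ⟨0, rfl⟩
      have d1 : (2*N - 1)/2 = f := by omega
      have d0 : (0:ℕ)/2 = 0 := rfl
      rcases Nat.even_or_odd kv with ⟨d, rfl⟩ | ⟨d, rfl⟩
      · have hEk : Even (d+d) := ⟨d, rfl⟩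
        have d3 : (d+d)/2 = d := by omega
        by_cases hq : d + d = 2*N
        · rw [if_pos (show 2*N = d + d by omega)]
          simp only [hE0, hO1, hEk, if_true, if_false, d1, d3, d0,
            show ¬ (d+d < 2*N-1) from by omega]
          have hd : d = f + 1 := by omega
          subst hd
          field_simp <;> ring_nf <;> (try simp) <;> (try ring)
          have hp : ((-1:F))^f * (-1)^N = -1 := by rw [hNdef, pow_succ, ← mul_assoc, ← pow_add, ← two_mul, pow_mul]; norm_num
          linear_combination (-a) * hp
        · rw [if_neg (show ¬ (2*N = d + d) by omega)]
          simp only [hE0, hO1, hEk, if_true, if_false, d1, d3, d0,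
            show (d+d < 2*N-1) from by omega]
          field_simp <;> ring_nf <;> (try simp) <;> (try ring)
      · have hOk : ¬ Even (2*d+1) := by simp only [Nat.even_iff]; omega
        have d3 : (2*d+1)/2 = d := by omega
        rw [if_neg (show ¬ (2*N = 2*d + 1) by omega)]
        simp only [hE0, hO1, hOk, if_true, if_false, d1, d3, d0,
          show ((0:ℕ) < 2*d+1) from by omega]
        field_simp <;> ring_nf <;> (try simp) <;> (try ring)
        have hp : ((-1:F))^f * (-1)^N = -1 := by rw [hNdef, pow_succ, ← mul_assoc, ← pow_add, ← two_mul, pow_mul]; norm_num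
        linear_combination (a * b * (-1)^d) * hp
    · -- interior
      rw [dif_pos ⟨trivial, by omega⟩, dif_pos ⟨by omega, by omega⟩,
        dif_neg (by omega), dif_neg (by omega)]
      simp only [Sm, Matrix.of_apply, one_mul, add_zero, zero_add]
      rcases Nat.even_or_odd jv with ⟨c, hc⟩ | ⟨c, hc⟩
      · -- jv even interior: jv = 2e+2
        obtain ⟨e, rfl⟩ : ∃ e, jv = 2*e + 2 := ⟨c - 1, by omega⟩
        have hO1 : ¬ Even (2*e+2+1) := by simp only [Nat.even_iff]; omega
        have hO2 : ¬ Even (2*e+2-1) := by simp only [Nat.even_iff]; omega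
        have d1 : (2*e+2+1)/2 = e+1 := by omega
        have d2 : (2*e+2-1)/2 = e := by omega
        rcases Nat.even_or_odd kv with ⟨d, rfl⟩ | ⟨d, rfl⟩
        · have hEk : Even (d+d) := ⟨d, rfl⟩
          have d3 : (d+d)/2 = d := by omega
          rcases Nat.lt_trichotomy (d+d) (2*e+2) with hlt | heq | hgt
          · rw [if_neg (show ¬ (2*e+2 = d + d) by omega)]
            simp only [hO1, hO2, hEk, if_true, if_false, d1, d2, d3,
              show (d+d < 2*e+2+1) from by omega, show (d+d < 2*e+2-1) from by omega]
            field_simp <;> ring_nf <;> (try simp) <;> (try ring)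
          · rw [if_pos (show 2*e+2 = d + d from heq.symm)]
            simp only [hO1, hO2, hEk, if_true, if_false, d1, d2, d3,
              show (d+d < 2*e+2+1) from by omega, show ¬ (d+d < 2*e+2-1) from by omega]
            obtain rfl : d = e + 1 := by omega
            field_simp <;> ring_nf <;> (try simp) <;> (try ring)
          · rw [if_neg (show ¬ (2*e+2 = d + d) by omega)]
            simp only [hO1, hO2, hEk, if_true, if_false, d1, d2, d3,
              show ¬ (d+d < 2*e+2+1) from by omega, show ¬ (d+d < 2*e+2-1) from by omega]
            field_simp <;> ring_nf <;> (try simp) <;> (try ring)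
        · have hOk : ¬ Even (2*d+1) := by simp only [Nat.even_iff]; omega
          have d3 : (2*d+1)/2 = d := by omega
          rw [if_neg (show ¬ (2*e+2 = 2*d + 1) by omega)]
          simp only [hO1, hO2, hOk, if_true, if_false, d1, d2, d3]
          field_simp <;> ring_nf <;> (try simp [np1, np2, np3]) <;> (try ring)
      · -- jv odd interior: jv = 2c+1
        subst hc
        have hE1 : Even (2*c+1+1) := ⟨c+1, by ring⟩
        have hE2 : Even (2*c+1-1) := ⟨c, by omega⟩
        have d1 : (2*c+1+1)/2 = c+1 := by omega
        have d2 : (2*c+1-1)/2 = c := by omega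
        rcases Nat.even_or_odd kv with ⟨d, rfl⟩ | ⟨d, rfl⟩
        · have hEk : Even (d+d) := ⟨d, rfl⟩
          have d3 : (d+d)/2 = d := by omega
          rw [if_neg (show ¬ (2*c+1 = d + d) by omega)]
          simp only [hE1, hE2, hEk, if_true, if_false, d1, d2, d3]
          field_simp <;> ring_nf <;> (try simp [np1, np2, np3]) <;> (try ring)
        · have hOk : ¬ Even (2*d+1) := by simp only [Nat.even_iff]; omega
          have d3 : (2*d+1)/2 = d := by omega
          rcases Nat.lt_trichotomy (2*c+1) (2*d+1) with hlt | heq | hgt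
          · rw [if_neg (show ¬ (2*c+1 = 2*d + 1) by omega)]
            simp only [hE1, hE2, hOk, if_true, if_false, d1, d2, d3,
              show (2*c+1+1 < 2*d+1) from by omega, show (2*c+1-1 < 2*d+1) from by omega]
            field_simp <;> ring_nf <;> (try simp) <;> (try ring)
          · rw [if_pos (show 2*c+1 = 2*d + 1 from heq)]
            simp only [hE1, hE2, hOk, if_true, if_false, d1, d2, d3,
              show ¬ (2*c+1+1 < 2*d+1) from by omega, show (2*c+1-1 < 2*d+1) from by omega]
            obtain rfl : d = c := by omega
            field_simp <;> ring_nf <;> (try simp) <;> (try ring)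
          · rw [if_neg (show ¬ (2*c+1 = 2*d + 1) by omega)]
            simp only [hE1, hE2, hOk, if_true, if_false, d1, d2, d3,
              show ¬ (2*c+1+1 < 2*d+1) from by omega, show ¬ (2*c+1-1 < 2*d+1) from by omega]
            field_simp <;> ring_nf <;> (try simp) <;> (try ring)


lemma Tm_submatrix (N : ℕ) (a b : F) :
    (Tm F N a b).submatrix Fin.succ Fin.succ = pathM F (2*N) := by
  ext i j
  simp only [Matrix.submatrix_apply, Tm, pathM, Matrix.of_apply, Fin.val_succ, true_and,
    show ∀ m : ℕ, ¬(m + 1 = 0) from fun m => by omega, false_and, and_false, if_false]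
  split_ifs <;> first | (exfalso; omega) | norm_num

lemma Tm_det (N : ℕ) (hN : 1 ≤ N) (a b : F) (hs : a + b ≠ 0) :
    (Tm F N a b).det = a + b := by
  have hTS := Tm_mul_Sm N hN a b hs
  have hST : Sm F N a b * Tm F N a b = 1 := mul_eq_one_comm.mp hTS
  have hadj : adjugate (Tm F N a b) = (Tm F N a b).det • Sm F N a b := by
    calc adjugate (Tm F N a b) = 1 * adjugate (Tm F N a b) := (Matrix.one_mul _).symm
      _ = (Sm F N a b * Tm F N a b) * adjugate (Tm F N a b) := by rw [hST]
      _ = Sm F N a b * (Tm F N a b * adjugate (Tm F N a b)) := Matrix.mul_assoc _ _ _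
      _ = Sm F N a b * ((Tm F N a b).det • 1) := by rw [Matrix.mul_adjugate]
      _ = (Tm F N a b).det • Sm F N a b := by rw [Matrix.mul_smul, Matrix.mul_one]
  have h00 : adjugate (Tm F N a b) 0 0 = (Tm F N a b).det * Sm F N a b 0 0 := by
    rw [hadj]; simp [Matrix.smul_apply, smul_eq_mul]
  have hS00 : Sm F N a b 0 0 = (-1)^N * (a+b)⁻¹ := by
    simp [Sm]
  have hupd : adjugate (Tm F N a b) 0 0 = (-1)^N := by
    rw [Matrix.adjugate_apply, Matrix.det_succ_row_zero, Finset.sum_eq_single 0]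
    · have h1 : (Tm F N a b).updateRow 0 (Pi.single 0 1) 0 0 = 1 := by
        rw [Matrix.updateRow_self]; simp
      have h2 : ((Tm F N a b).updateRow 0 (Pi.single 0 1)).submatrix Fin.succ
          ((0 : Fin (2*N+1)).succAbove) = pathM F (2*N) := by
        rw [Fin.succAbove_zero]
        rw [show ((Tm F N a b).updateRow 0 (Pi.single 0 1)).submatrix Fin.succ Fin.succ
            = (Tm F N a b).submatrix Fin.succ Fin.succ from ?_]
        · exact Tm_submatrix N a b
        · ext i j
          simp [Matrix.updateRow_apply, Fin.succ_ne_zero]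
      rw [h1, h2, pathM_even]
      simp
    · intro j _ hj
      have : (Tm F N a b).updateRow 0 (Pi.single 0 1) 0 j = 0 := by
        rw [Matrix.updateRow_self]
        exact Pi.single_eq_of_ne hj 1
      rw [this]
      ring
    · simp
  rw [hupd, hS00] at h00
  have hne : ((-1:F))^N ≠ 0 := pow_ne_zero _ (by norm_num)
  field_simp at h00
  have hc : (Tm F N a b).det * (-1)^N = (a+b) * (-1)^N := by
    rw [← h00]
  exact mul_right_cancel₀ hne hc

def Bm (F : Type*) [Field F] (n : ℕ) : Matrix (Fin (2*(n+1)+1)) (TriIdx n) F :=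
  Matrix.of fun j q => if ((q.1:ℕ) = n ∧ Even (q.2:ℕ)) ∧ (j:ℕ) = (q.2:ℕ)+1 then 1 else 0

def Cm (F : Type*) [Field F] (n : ℕ) : Matrix (TriIdx n) (Fin (2*(n+1)+1)) F :=
  Matrix.of fun p j => if ((p.1:ℕ) = n ∧ Even (p.2:ℕ)) ∧ (j:ℕ) = (p.2:ℕ)+1 then 1 else 0

def triEquiv (n : ℕ) : (Fin (2*(n+1)+1) ⊕ TriIdx n) ≃ TriIdx (n+1) where
  toFun u := match u with
    | .inl j => ⟨Fin.last (n+1), j⟩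
    | .inr p => ⟨p.1.castSucc, p.2⟩
  invFun p :=
    if h : (p.1 : ℕ) = n+1 then .inl (Fin.cast (by rw [h]) p.2)
    else .inr ⟨⟨(p.1 : ℕ), by have := p.1.isLt; omega⟩, p.2⟩
  left_inv u := by
    cases u with
    | inl j => simp
    | inr p =>
        have h : ((p.1.castSucc : Fin (n+2)) : ℕ) ≠ n+1 := by
          have := p.1.isLt; simp [Fin.coe_castSucc]; omega
        simp only [dif_neg h]
        rfl
  right_inv p := by
    rcases p with ⟨⟨mv, hm⟩, k⟩
    by_cases h : mv = n+1
    · subst h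
      dsimp only
      rw [dif_pos rfl]
      rfl
    · dsimp only
      rw [dif_neg h]
      rfl

lemma huckel_block (n : ℕ) (x y : Fin (n+2) → F) :
    (Huckel F (n+1) x y).submatrix (triEquiv n) (triEquiv n)
      = fromBlocks (Tm F (n+1) (x (Fin.last (n+1))) (y (Fin.last (n+1))))
          (Bm F n) (Cm F n)
          (Huckel F n (fun m => x m.castSucc) (fun m => y m.castSucc)) := by
  ext u v
  cases u with
  | inl j =>
      cases v with
      | inl k =>
          simp only [Matrix.submatrix_apply, triEquiv, Equiv.coe_fn_mk,
            Matrix.fromBlocks_apply₁₁, Huckel, Tm, Matrix.of_apply, Fin.val_last,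
            Nat.even_iff, true_and, and_true, eq_self_iff_true, if_true,
            show ¬(n+1 = 0) from by omega, false_and, and_false, if_false]
          split_ifs <;> first | rfl | (exfalso; omega) | norm_num
      | inr q =>
          have hne : Fin.last (n+1) ≠ q.1.castSucc := (Fin.castSucc_lt_last q.1).ne'
          have hne2 : ¬ (Fin.last (n+1) = q.1.castSucc) := hne
          simp only [Matrix.submatrix_apply, triEquiv, Equiv.coe_fn_mk,
            Matrix.fromBlocks_apply₁₂, Huckel, Bm, Matrix.of_apply, Fin.val_last,
            Fin.coe_castSucc, Nat.even_iff, hne2, show ¬(n+1 = 0) from by omega,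
            false_and, and_false, if_false]
          split_ifs <;> first | rfl | (exfalso; omega) | norm_num
  | inr p =>
      cases v with
      | inl k =>
          have hne2 : ¬ (p.1.castSucc = Fin.last (n+1)) := (Fin.castSucc_lt_last p.1).ne
          simp only [Matrix.submatrix_apply, triEquiv, Equiv.coe_fn_mk,
            Matrix.fromBlocks_apply₂₁, Huckel, Cm, Matrix.of_apply, Fin.val_last,
            Fin.coe_castSucc, Nat.even_iff, hne2, show ¬(n+1 = 0) from by omega,
            false_and, and_false, if_false]
          split_ifs <;> first | rfl | (exfalso; omega) | norm_num
      | inr q =>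
          simp only [Matrix.submatrix_apply, triEquiv, Equiv.coe_fn_mk,
            Matrix.fromBlocks_apply₂₂, Huckel, Matrix.of_apply,
            Fin.coe_castSucc, Fin.castSucc_inj, Nat.even_iff]

lemma schur_eq (n : ℕ) (a b : F) :
    Cm F n * (Sm F (n+1) a b * Bm F n) =
      (Matrix.of fun (p : TriIdx n) (_ : Unit) => b * borderU F n p) *
      ((Matrix.of fun (_ : Unit) (_ : Unit) => (a+b)⁻¹) *
       (Matrix.of fun (_ : Unit) (q : TriIdx n) => (-1:F)^(n+1) * a * borderU F n q)) := by
  have hR : ∀ (p q : TriIdx n),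
      ((Matrix.of fun (p : TriIdx n) (_ : Unit) => b * borderU F n p) *
      ((Matrix.of fun (_ : Unit) (_ : Unit) => (a+b)⁻¹) *
       (Matrix.of fun (_ : Unit) (q : TriIdx n) => (-1:F)^(n+1) * a * borderU F n q))) p q
      = b * borderU F n p * ((a+b)⁻¹ * ((-1:F)^(n+1) * a * borderU F n q)) := by
    intro p q
    simp only [Matrix.mul_apply, Matrix.of_apply, Finset.univ_unique, Finset.sum_singleton]
  ext p q
  rw [hR, Matrix.mul_apply]
  simp only [Cm, Matrix.of_apply]
  rw [sum_collapse]
  by_cases hp : (p.1:ℕ) = n ∧ Even (p.2:ℕ)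
  · rw [dif_pos ⟨hp, by have := p.2.isLt; have := p.1.isLt; omega⟩, one_mul,
      Matrix.mul_apply]
    simp only [Bm, Matrix.of_apply]
    rw [sum_collapse']
    by_cases hq : (q.1:ℕ) = n ∧ Even (q.2:ℕ)
    · rw [dif_pos ⟨hq, by have := q.2.isLt; have := q.1.isLt; omega⟩, mul_one]
      have hbp : borderU F n p = (-1:F)^((p.2:ℕ)/2) := by rw [borderU, if_pos hp]
      have hbq : borderU F n q = (-1:F)^((q.2:ℕ)/2) := by rw [borderU, if_pos hq]
      rw [hbp, hbq]
      simp only [Sm, Matrix.of_apply]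
      obtain ⟨α, hα⟩ := hp.2
      obtain ⟨β, hβ⟩ := hq.2
      have d1 : ((p.2:ℕ)+1)/2 = α := by omega
      have d2 : ((q.2:ℕ)+1)/2 = β := by omega
      have d3 : (p.2:ℕ)/2 = α := by omega
      have d4 : (q.2:ℕ)/2 = β := by omega
      have hO1 : ¬ Even ((p.2:ℕ)+1) := by simp only [Nat.even_iff]; omega
      have hO2 : ¬ Even ((q.2:ℕ)+1) := by simp only [Nat.even_iff]; omega
      simp only [d1, d2, d3, d4, hO1, hO2, if_false]
      ring
    · rw [dif_neg (by tauto)]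
      have hbq : borderU F n q = 0 := by rw [borderU, if_neg hq]
      rw [hbq]
      ring
  · rw [dif_neg (by tauto)]
    have hbp : borderU F n p = 0 := by rw [borderU, if_neg hp]
    rw [hbp]
    ring


end HkAux

/-- The determinant of the Hückel matrix of the triangle with rows `0, …, n+1` equals the
determinant of the bordered matrix of size `(n+1)² + 1` obtained by replacing the last row
of atoms by a single bordering row/column. (This is the case `n ≥ 1` of the statement,
with `n` replaced by `n+1`.) -/
theorem det_Huckel_bordered (F : Type*) [Field F] (n : ℕ) (x y : Fin (n+2) → F)
    (h : x (Fin.last (n+1)) + y (Fin.last (n+1)) ≠ 0) :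
    (Huckel F (n+1) x y).det
      = (Matrix.fromBlocks
          (Matrix.of fun (_ : Unit) (_ : Unit) =>
            x (Fin.last (n+1)) + y (Fin.last (n+1)))
          (Matrix.of fun (_ : Unit) (q : TriIdx n) =>
            (-1 : F) ^ (n+1) * x (Fin.last (n+1)) * borderU F n q)
          (Matrix.of fun (p : TriIdx n) (_ : Unit) =>
            y (Fin.last (n+1)) * borderU F n p)
          (Huckel F n (fun m => x m.castSucc) (fun m => y m.castSucc))).det := by
  classical
  set a := x (Fin.last (n+1)) with ha
  set b := y (Fin.last (n+1)) with hb
  have hTS := HkAux.Tm_mul_Sm (F := F) (n+1) (by omega) a b h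
  have hST : HkAux.Sm F (n+1) a b * HkAux.Tm F (n+1) a b = 1 :=
    mul_eq_one_comm.mp hTS
  letI : Invertible (HkAux.Tm F (n+1) a b) := ⟨HkAux.Sm F (n+1) a b, hST, hTS⟩
  have hAL : (Matrix.of fun (_ : Unit) (_ : Unit) => (a+b)⁻¹) *
      (Matrix.of fun (_ : Unit) (_ : Unit) => a + b) = 1 := by
    ext u v
    cases u; cases v
    simp [Matrix.mul_apply, Matrix.one_apply, inv_mul_cancel₀ h]
  have hAR : (Matrix.of fun (_ : Unit) (_ : Unit) => a + b) *
      (Matrix.of fun (_ : Unit) (_ : Unit) => (a+b)⁻¹) = 1 := by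
    ext u v
    cases u; cases v
    simp [Matrix.mul_apply, Matrix.one_apply, mul_inv_cancel₀ h]
  letI : Invertible (Matrix.of fun (_ : Unit) (_ : Unit) => a + b) :=
    ⟨Matrix.of fun (_ : Unit) (_ : Unit) => (a+b)⁻¹, hAL, hAR⟩
  have h1 : (Huckel F (n+1) x y).det
      = (fromBlocks (HkAux.Tm F (n+1) a b) (HkAux.Bm F n) (HkAux.Cm F n)
          (Huckel F n (fun m => x m.castSucc) (fun m => y m.castSucc))).det := by
    rw [← HkAux.huckel_block n x y, Matrix.det_submatrix_equiv_self]
  rw [h1, Matrix.det_fromBlocks₁₁, Matrix.det_fromBlocks₁₁]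
  rw [HkAux.Tm_det (n+1) (by omega) a b h]
  have hdA : (Matrix.of fun (_ : Unit) (_ : Unit) => a + b).det = a + b := by
    rw [Matrix.det_unique]
    rfl
  rw [hdA]
  have hmat : HkAux.Cm F n * ⅟(HkAux.Tm F (n+1) a b) * HkAux.Bm F n
      = (Matrix.of fun (p : TriIdx n) (_ : Unit) => b * borderU F n p) *
        ⅟(Matrix.of fun (_ : Unit) (_ : Unit) => a + b) *
        (Matrix.of fun (_ : Unit) (q : TriIdx n) => (-1:F)^(n+1) * a * borderU F n q) := by
    calc HkAux.Cm F n * ⅟(HkAux.Tm F (n+1) a b) * HkAux.Bm F n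
        = HkAux.Cm F n * (HkAux.Sm F (n+1) a b * HkAux.Bm F n) := by
          rw [show ⅟(HkAux.Tm F (n+1) a b) = HkAux.Sm F (n+1) a b from rfl,
            Matrix.mul_assoc]
      _ = (Matrix.of fun (p : TriIdx n) (_ : Unit) => b * borderU F n p) *
          ((Matrix.of fun (_ : Unit) (_ : Unit) => (a+b)⁻¹) *
           (Matrix.of fun (_ : Unit) (q : TriIdx n) => (-1:F)^(n+1) * a * borderU F n q)) :=
          HkAux.schur_eq n a b
      _ = _ := by
          rw [show ⅟(Matrix.of fun (_ : Unit) (_ : Unit) => a + b)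
              = (Matrix.of fun (_ : Unit) (_ : Unit) => (a+b)⁻¹) from rfl,
            Matrix.mul_assoc]
  rw [hmat]
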